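/- Nash-equilibrium utilities in the asymmetric resource-sharing game: let k ≥ 2, γ > 0, â > k/γ, and let λ₁ ≥ λ₂ ≥ … ≥ λ_k > 0 be influence factors. Define M := max { m ≤ k : ∑_{i=1}^{m} 1/λᵢ − (m−1)/λ_m > 0 } and s := ∑_{m=1}^{M} 1/λ_m. Consider the k-player game where player m chooses b_m ∈ [0, â] and receives payoff φ_m(b) = λ_m b_m/(∑_{j=1}^{k} λ_j b_j) − γ b_m. Then at every Nash equilibrium b with ∑_j λ_j b_j > 0, the payoffs are φ_m(b) = ((s − (M−1)/λ_m)/s)² for every m ≤ M, and φ_m(b) = 0 for every m > M. -/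

import Mathlib

private lemma rsg_eps_le (a c d δ0 : ℝ) (hδ0 : 0 < δ0) (hd : 0 ≤ d)
    (h : ∀ δ : ℝ, 0 < δ → δ ≤ δ0 → a ≤ c + d * δ) : a ≤ c := by
  refine le_of_forall_pos_le_add fun ε hε => ?_
  have hδ : 0 < min δ0 (ε / (d + 1)) := lt_min hδ0 (by positivity)
  have h1 := h _ hδ (min_le_left _ _)
  have h2 : d * min δ0 (ε / (d + 1)) ≤ ε := by
    calc d * min δ0 (ε / (d + 1)) ≤ d * (ε / (d + 1)) :=
          mul_le_mul_of_nonneg_left (min_le_right _ _) hd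
      _ ≤ ε := by
          rw [mul_comm, div_mul_eq_mul_div, div_le_iff₀ (by linarith)]
          nlinarith
  linarith

private lemma rsg_sum_update (k m : ℕ) (hm : m < k) (lam b : ℕ → ℝ) (x : ℝ) :
    ∑ j ∈ Finset.range k, lam j * Function.update b m x j
      = (∑ j ∈ Finset.range k, lam j * b j) - lam m * b m + lam m * x := by
  have hmem : m ∈ Finset.range k := Finset.mem_range.mpr hm
  rw [← Finset.sum_erase_add _ _ hmem, ← Finset.sum_erase_add _ (fun j => lam j * b j) hmem,
      Function.update_self]
  have h : ∑ j ∈ (Finset.range k).erase m, lam j * Function.update b m x j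
       = ∑ j ∈ (Finset.range k).erase m, lam j * b j :=
    Finset.sum_congr rfl fun j hj => by rw [Function.update_of_ne (Finset.ne_of_mem_erase hj)]
  rw [h]; ring


/-- Payoff of player `m` in the resource-sharing game among the players `0, …, n − 1`
with influence factors `lam` and cost factor `γ`:
`φ_m(b) = lam m * b m / (∑_{j<n} lam j * b j) − γ * b m`. -/
noncomputable def rsgPayoff (n : ℕ) (lam : ℕ → ℝ) (γ : ℝ) (b : ℕ → ℝ) (m : ℕ) : ℝ :=
  lam m * b m / (∑ j ∈ Finset.range n, lam j * b j) - γ * b m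

/-- A Nash equilibrium of the resource-sharing game with actions in `[0, â]`: no player
`m < n` can strictly increase its payoff by unilaterally changing its action. -/
def IsNashRSG (n : ℕ) (lam : ℕ → ℝ) (γ ahat : ℝ) (b : ℕ → ℝ) : Prop :=
  ∀ m < n, ∀ x ∈ Set.Icc (0 : ℝ) ahat,
    rsgPayoff n lam γ (Function.update b m x) m ≤ rsgPayoff n lam γ b m

set_option maxHeartbeats 1000000 in
/-- Nash-equilibrium utilities in the asymmetric resource-sharing game: `k ≥ 2` players
(indexed `0, …, k − 1`) with ordered positive influence factors
`lam 0 ≥ lam 1 ≥ … ≥ lam (k−1) > 0`, cost factor `γ > 0` and action bound `â > k/γ`.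
With `M` the largest `m` (with `1 ≤ m ≤ k`) such that
`∑_{i<m} 1/lam i − (m−1)/lam (m−1) > 0`, and `s := ∑_{m<M} 1/lam m`, at every Nash
equilibrium `b` with `∑_j lam j * b j > 0` the payoffs are
`φ_m(b) = ((s − (M−1)/lam m)/s)²` for `m < M` and `φ_m(b) = 0` for `M ≤ m < k`. -/
theorem asymmetric_rsg_nash_utilities (k : ℕ) (hk : 2 ≤ k)
    (γ ahat : ℝ) (hγ : 0 < γ) (hahat : (k : ℝ) / γ < ahat)
    (lam : ℕ → ℝ) (hpos : ∀ i < k, 0 < lam i)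
    (hmono : ∀ i j, i ≤ j → j < k → lam j ≤ lam i)
    (M : ℕ) (hM1 : 1 ≤ M) (hMk : M ≤ k)
    (hMpos : 0 < (∑ i ∈ Finset.range M, 1 / lam i) - ((M : ℝ) - 1) / lam (M - 1))
    (hMmax : ∀ m, 1 ≤ m → m ≤ k →
      0 < (∑ i ∈ Finset.range m, 1 / lam i) - ((m : ℝ) - 1) / lam (m - 1) → m ≤ M)
    (b : ℕ → ℝ) (hb : ∀ m < k, b m ∈ Set.Icc (0 : ℝ) ahat)
    (hNE : IsNashRSG k lam γ ahat b)
    (hsum : 0 < ∑ j ∈ Finset.range k, lam j * b j) :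
    ∀ m < k,
      rsgPayoff k lam γ b m =
        if m < M then
          (((∑ i ∈ Finset.range M, 1 / lam i) - ((M : ℝ) - 1) / lam m) /
            (∑ i ∈ Finset.range M, 1 / lam i)) ^ 2
        else 0 := by
    classical
  set B := ∑ j ∈ Finset.range k, lam j * b j with hBdef
  have hB : 0 < B := hsum
  clear_value B
  have hkR : (1 : ℝ) ≤ (k : ℝ) := by exact_mod_cast Nat.one_le_of_lt hk
  have hah : 0 < ahat := lt_trans (by positivity) hahat
  have hbnn : ∀ m, m < k → 0 ≤ b m := fun m hm => (hb m hm).1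
  -- each term nonneg and bounded by B
  have hBm_nonneg : ∀ m, m < k → 0 ≤ B - lam m * b m := by
    intro m hm
    have hmem : m ∈ Finset.range k := Finset.mem_range.mpr hm
    have h1 : ∑ j ∈ (Finset.range k).erase m, lam j * b j + lam m * b m = B := by
      rw [hBdef]; exact Finset.sum_erase_add _ _ hmem
    have h2 : 0 ≤ ∑ j ∈ (Finset.range k).erase m, lam j * b j := by
      apply Finset.sum_nonneg
      intro j hj
      have hjk : j < k := Finset.mem_range.mp (Finset.mem_of_mem_erase hj)
      exact mul_nonneg (hpos j hjk).le (hbnn j hjk)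
    linarith
  -- usable form of the Nash condition
  have key : ∀ m, m < k → ∀ x ∈ Set.Icc (0:ℝ) ahat,
      lam m * x / (B - lam m * b m + lam m * x) - γ * x ≤ lam m * b m / B - γ * b m := by
    intro m hm x hx
    have h := hNE m hm x hx
    unfold rsgPayoff at h
    rwa [rsg_sum_update k m hm, Function.update_self, ← hBdef] at h
  -- actions are strictly below the cap
  have hb_lt : ∀ m, m < k → b m < ahat := by
    intro m hm
    have h0 := key m hm 0 ⟨le_rfl, hah.le⟩
    simp only [mul_zero, add_zero, zero_div, sub_zero] at h0
    have h1 : lam m * b m / B ≤ 1 := by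
      rw [div_le_one hB]; linarith [hBm_nonneg m hm]
    have h2 : γ * b m ≤ 1 := le_trans (by linarith) h1
    have h3 : b m ≤ 1 / γ := by rw [le_div_iff₀ hγ]; linarith
    have h4 : (1:ℝ) / γ ≤ (k:ℝ) / γ := by gcongr
    linarith
  -- opponents' aggregate is positive
  have hBm_pos : ∀ m, m < k → 0 < B - lam m * b m := by
    intro m hm
    rcases (hBm_nonneg m hm).lt_or_eq with h | h
    · exact h
    exfalso
    have hlm := hpos m hm
    have hbm : 0 < b m := by nlinarith
    have hx : b m / 2 ∈ Set.Icc (0:ℝ) ahat :=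
      ⟨by linarith, by linarith [hb_lt m hm]⟩
    have h1 := key m hm _ hx
    have hd : B - lam m * b m + lam m * (b m / 2) = lam m * (b m / 2) := by linarith
    rw [hd, div_self (by positivity)] at h1
    have hlb : lam m * b m / B = 1 := by
      rw [div_eq_one_iff_eq hB.ne']; linarith
    rw [hlb] at h1
    nlinarith
  -- Claim A : lam m * B_m ≤ γ B²
  have claimA : ∀ m, m < k → lam m * (B - lam m * b m) ≤ γ * B ^ 2 := by
    intro m hm
    have hlm := hpos m hm
    apply rsg_eps_le _ _ (γ * lam m * B) (ahat - b m) (by linarith [hb_lt m hm])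
      (by positivity)
    intro δ hδ hδle
    have hx : b m + δ ∈ Set.Icc (0:ℝ) ahat := ⟨by linarith [hbnn m hm], by linarith⟩
    have h1 := key m hm _ hx
    have hu : 0 < B - lam m * b m + lam m * (b m + δ) := by nlinarith [hBm_pos m hm]
    set u := B - lam m * b m + lam m * (b m + δ) with hudef
    have h2 : lam m * (b m + δ) / u ≤ (lam m * b m + γ * δ * B) / B := by
      rw [add_div, mul_div_cancel_right₀ (γ * δ) hB.ne']
      linarith
    rw [div_le_div_iff₀ hu hB, hudef] at h2
    have h3 : δ * (lam m * (B - lam m * b m)) ≤ δ * (γ * B ^ 2 + γ * lam m * B * δ) := by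
      nlinarith [h2]
    have := (mul_le_mul_iff_right₀ hδ).mp h3
    linarith
  -- Claim B : for active players, γ B² ≤ lam m * B_m
  have claimB : ∀ m, m < k → 0 < b m → γ * B ^ 2 ≤ lam m * (B - lam m * b m) := by
    intro m hm hbm
    have hlm := hpos m hm
    apply rsg_eps_le _ _ (γ * lam m * B) (b m) hbm (by positivity)
    intro δ hδ hδle
    have hx : b m - δ ∈ Set.Icc (0:ℝ) ahat := ⟨by linarith, by linarith [hb_lt m hm]⟩
    have h1 := key m hm _ hx
    have hu : 0 < B - lam m * b m + lam m * (b m - δ) := by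
      nlinarith [hBm_pos m hm, hbnn m hm]
    set u := B - lam m * b m + lam m * (b m - δ) with hudef
    have h2 : lam m * (b m - δ) / u ≤ (lam m * b m - γ * δ * B) / B := by
      rw [sub_div, mul_div_cancel_right₀ (γ * δ) hB.ne']
      linarith
    rw [div_le_div_iff₀ hu hB, hudef] at h2
    have h3 : δ * (γ * B ^ 2) ≤ δ * (lam m * (B - lam m * b m) + γ * lam m * B * δ) := by
      nlinarith [h2]
    have := (mul_le_mul_iff_right₀ hδ).mp h3
    linarith
  -- characterization of active / inactive players
  have hact : ∀ m, m < k → 0 < b m →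
      γ * B < lam m ∧ lam m * b m = B - γ * B ^ 2 * (1 / lam m) := by
    intro m hm hbm
    have hlm := hpos m hm
    have heq : lam m * (B - lam m * b m) = γ * B ^ 2 :=
      le_antisymm (claimA m hm) (claimB m hm hbm)
    constructor
    · by_contra hcon
      push_neg at hcon
      have hcon2 : lam m * B ≤ γ * B * B := mul_le_mul_of_nonneg_right hcon hB.le
      nlinarith [mul_pos (mul_pos hlm hlm) hbm]
    · refine mul_left_cancel₀ hlm.ne' ?_
      have h1 : lam m * (γ * B ^ 2 * (1 / lam m)) = γ * B ^ 2 := by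
        field_simp
      rw [mul_sub, h1]
      linear_combination -heq
  have hinact : ∀ m, m < k → b m = 0 → lam m ≤ γ * B := by
    intro m hm h0
    have h1 := claimA m hm
    rw [h0] at h1
    nlinarith
  -- the set of active players is an initial segment
  have hseg : ∀ i j, i ≤ j → j < k → 0 < b j → 0 < b i := by
    intro i j hij hj hbj
    have hik : i < k := lt_of_le_of_lt hij hj
    rcases (hbnn i hik).lt_or_eq with h | h
    · exact h
    · exfalso
      have h1 := hinact i hik h.symm
      have h2 := (hact j hj hbj).1
      have h3 := hmono i j hij hj
      linarith
  -- M' : the number of active players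
  have hex : ∃ n, n < k → b n = 0 := ⟨k, fun h => absurd h (lt_irrefl k)⟩
  set M' := Nat.find hex with hM'def
  have hM'k : M' ≤ k := Nat.find_le (fun h => absurd h (lt_irrefl k))
  have hactive : ∀ n, n < M' → 0 < b n := by
    intro n hn
    have := Nat.find_min hex hn
    push_neg at this
    exact (hbnn n this.1).lt_of_ne (Ne.symm this.2)
  have hzero : ∀ n, M' ≤ n → n < k → b n = 0 := by
    intro n hMn hn
    by_contra h
    have hbn : 0 < b n := (hbnn n hn).lt_of_ne (Ne.symm h)
    have hM'lt : M' < k := lt_of_le_of_lt hMn hn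
    have := Nat.find_spec hex hM'lt
    have := hseg M' n hMn hn hbn
    linarith
  have hBsum : B = ∑ j ∈ Finset.range M', lam j * b j := by
    have h1 : ∑ j ∈ Finset.Ico 0 M', lam j * b j + ∑ j ∈ Finset.Ico M' k, lam j * b j
        = ∑ j ∈ Finset.Ico 0 k, lam j * b j :=
      Finset.sum_Ico_consecutive _ (Nat.zero_le M') hM'k
    have h2 : ∑ j ∈ Finset.Ico M' k, lam j * b j = 0 := by
      apply Finset.sum_eq_zero
      intro j hj
      rw [Finset.mem_Ico] at hj
      rw [hzero j hj.1 hj.2, mul_zero]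
    have h3 : ∑ j ∈ Finset.Ico 0 k, lam j * b j = B := by
      rw [hBdef, Finset.range_eq_Ico]
    have h4 : ∑ j ∈ Finset.range M', lam j * b j = ∑ j ∈ Finset.Ico 0 M', lam j * b j := by
      rw [Finset.range_eq_Ico]
    rw [h4]
    linarith
  clear_value M'
  clear hM'def hex
  have hM'0 : M' ≠ 0 := by
    intro h0
    have hz : B = 0 := by rw [hBsum, h0, Finset.sum_range_zero]
    linarith
  have hM'ne1 : M' ≠ 1 := by
    intro h1
    have hB0 : B = lam 0 * b 0 := by rw [hBsum, h1, Finset.sum_range_one]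
    have := hBm_pos 0 (by omega)
    linarith
  have hM'2 : 2 ≤ M' := by omega
  have hM'1k : M' - 1 < k := by omega
  have hM'1M' : M' - 1 < M' := by omega
  -- the sum identity: γ B s' = M' − 1
  set s' := ∑ i ∈ Finset.range M', 1 / lam i with hs'def
  clear_value s'
  have hs'pos : 0 < s' := by
    rw [hs'def]
    apply Finset.sum_pos
    · intro i hi
      have h := hpos i (lt_of_lt_of_le (Finset.mem_range.mp hi) hM'k)
      exact one_div_pos.mpr h
    · exact ⟨0, Finset.mem_range.mpr (by omega)⟩
  have hsum_id : γ * B * s' = (M' : ℝ) - 1 := by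
    have h1 : ∑ j ∈ Finset.range M', lam j * b j
        = ∑ j ∈ Finset.range M', (B - γ * B ^ 2 * (1 / lam j)) := by
      apply Finset.sum_congr rfl
      intro j hj
      have hjM := Finset.mem_range.mp hj
      exact (hact j (lt_of_lt_of_le hjM hM'k) (hactive j hjM)).2
    rw [h1, Finset.sum_sub_distrib, Finset.sum_const, ← Finset.mul_sum, ← hs'def,
        Finset.card_range, nsmul_eq_mul] at hBsum
    have h2 : B * (γ * B * s') = B * ((M' : ℝ) - 1) := by linear_combination hBsum
    exact mul_left_cancel₀ hB.ne' h2
  -- M' = M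
  have hMM' : M' = M := by
    have hle : M' ≤ M := by
      apply hMmax M' (by omega) hM'k
      have hlm := hpos (M' - 1) hM'1k
      have h2 := (hact (M' - 1) hM'1k (hactive _ hM'1M')).1
      rw [sub_pos, div_lt_iff₀ hlm]
      have hc : ((M' : ℝ) - 1) = γ * B * s' := hsum_id.symm
      rw [hc]
      nlinarith
    rcases lt_or_eq_of_le hle with hlt | heq
    · exfalso
      have hM'k' : M' < k := lt_of_lt_of_le hlt hMk
      have hbM' : b M' = 0 := hzero M' le_rfl hM'k'
      have hlmMp := hpos M' hM'k'
      have hlmM1 := hpos (M - 1) (by omega)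
      have h1 : lam M' ≤ γ * B := hinact M' hM'k' hbM'
      have hs'le : s' ≤ ((M':ℝ) - 1) / lam M' := by
        rw [le_div_iff₀ hlmMp]
        nlinarith [hsum_id]
      -- bound the tail sum
      have htail : ∑ i ∈ Finset.Ico M' M, 1 / lam i ≤ ((M:ℝ) - (M':ℝ)) / lam (M - 1) := by
        have hcard : ((Finset.Ico M' M).card : ℝ) = (M:ℝ) - (M':ℝ) := by
          rw [Nat.card_Ico]
          rw [Nat.cast_sub hle]
        calc ∑ i ∈ Finset.Ico M' M, 1 / lam i
            ≤ ∑ i ∈ Finset.Ico M' M, 1 / lam (M - 1) := by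
              apply Finset.sum_le_sum
              intro i hi
              rw [Finset.mem_Ico] at hi
              have hik : i < k := lt_of_lt_of_le hi.2 hMk
              have : lam (M - 1) ≤ lam i := hmono i (M - 1) (by omega) (by omega)
              gcongr
          _ = ((M:ℝ) - (M':ℝ)) / lam (M - 1) := by
              rw [Finset.sum_const, nsmul_eq_mul, hcard, div_eq_mul_inv, one_mul,
                div_eq_mul_inv]
      have hsplit : ∑ i ∈ Finset.range M, 1 / lam i = s' + ∑ i ∈ Finset.Ico M' M, 1 / lam i := by
        rw [hs'def, Finset.range_eq_Ico,
          ← Finset.sum_Ico_consecutive (fun i => 1 / lam i) (Nat.zero_le M') hlt.le, Finset.range_eq_Ico]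
      have hmono2 : lam (M - 1) ≤ lam M' := hmono M' (M - 1) (by omega) (by omega)
      have hb1 : ((M':ℝ) - 1) / lam M' ≤ ((M':ℝ) - 1) / lam (M - 1) := by
        apply div_le_div_of_nonneg_left _ hlmM1 hmono2
        have : (2:ℝ) ≤ (M':ℝ) := by exact_mod_cast hM'2
        linarith
      have hfin : ∑ i ∈ Finset.range M, 1 / lam i ≤ ((M:ℝ) - 1) / lam (M - 1) := by
        rw [hsplit]
        have : ((M':ℝ) - 1) / lam (M - 1) + ((M:ℝ) - (M':ℝ)) / lam (M - 1)
            = ((M:ℝ) - 1) / lam (M - 1) := by ring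
        linarith
      linarith [hMpos]
    · exact heq
  -- conclusion
  rw [← hMM']
  intro m hm
  unfold rsgPayoff
  rw [← hBdef]
  by_cases hmM : m < M'
  · rw [if_pos hmM]
    have hlm := hpos m hm
    have hbm := hactive m hmM
    have heqm : lam m * (B - lam m * b m) = γ * B ^ 2 :=
      le_antisymm (claimA m hm) (claimB m hm hbm)
    have hbval : b m = (lam m - γ * B) * B / lam m ^ 2 := by
      rw [eq_div_iff (by positivity)]
      linear_combination -heqm
    have hMs : ((M' : ℝ) - 1) = γ * B * s' := hsum_id.symm
    rw [← hs'def, hMs, hbval]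
    field_simp
  · rw [if_neg hmM]
    rw [hzero m (le_of_not_gt hmM) hm]
    simp
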